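/- An irrational number r = [c_0; c_1, c_2, ...] is called well-approximated if there is an increasing sequence {k_n} of natural numbers such that for every constant C > 0, exp(C·q_{k_n})/q_{k_n+1} → 0 as n → ∞, where p_k/q_k are the convergents of r. Well-approximated irrational numbers exist; for example, the number obtained by inductively setting c_k = ⌈exp(q_{k-1}²)⌉ is well-approximated. -/

import Mathlib

open Filter Topology

/-- Iterates of the Gauss map starting at `θ`. -/
noncomputable def gaussIter (θ : ℝ) : ℕ → ℝ
  | 0 => θ
  | k + 1 => (Int.fract (gaussIter θ k))⁻¹

/-- The `k`-th partial quotient (digit) of the continued fraction of `θ`. -/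
noncomputable def cfA (θ : ℝ) (k : ℕ) : ℤ := ⌊gaussIter θ k⌋

/-- Numerators of the continued fraction convergents of `θ`. -/
noncomputable def cfP (θ : ℝ) : ℕ → ℤ
  | 0 => cfA θ 0
  | 1 => cfA θ 1 * cfA θ 0 + 1
  | k + 2 => cfA θ (k + 2) * cfP θ (k + 1) + cfP θ k

/-- Denominators of the continued fraction convergents of `θ`. -/
noncomputable def cfQ (θ : ℝ) : ℕ → ℤ
  | 0 => 1
  | 1 => cfA θ 1
  | k + 2 => cfA θ (k + 2) * cfQ θ (k + 1) + cfQ θ k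


/-- An irrational number `θ` is *well-approximated* if there is an increasing sequence
`k n` of natural numbers such that for every constant `C > 0`,
`exp (C * q (k n)) / q (k n + 1) → 0` as `n → ∞`. -/
def WellApproximated (θ : ℝ) : Prop :=
  Irrational θ ∧ ∃ k : ℕ → ℕ, StrictMono k ∧ ∀ C : ℝ, 0 < C →
    Tendsto (fun n => Real.exp (C * (cfQ θ (k n) : ℝ)) / (cfQ θ (k n + 1) : ℝ))
      atTop (𝓝 0)

namespace WAaux

/-- `dseq k = (q (k-1), q k)` where `q` is the denominator sequence and the digits are
`a (k+1) = ⌈exp (q k ^ 2)⌉`. -/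
noncomputable def dseq : ℕ → ℤ × ℤ
  | 0 => (0, 1)
  | k + 1 => ((dseq k).2, ⌈Real.exp (((dseq k).2 : ℝ) ^ 2)⌉ * (dseq k).2 + (dseq k).1)

/-- The digit sequence. -/
noncomputable def aseq : ℕ → ℤ
  | 0 => 0
  | k + 1 => ⌈Real.exp (((dseq k).2 : ℝ) ^ 2)⌉

/-- The denominator sequence. -/
noncomputable def qseq (k : ℕ) : ℤ := (dseq k).2

lemma qseq_zero : qseq 0 = 1 := rfl

lemma qseq_succ (k : ℕ) : qseq (k + 1) = aseq (k + 1) * qseq k + (dseq k).1 := rfl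

lemma dseq_fst (k : ℕ) : (dseq (k + 1)).1 = qseq k := rfl

lemma dseq_nonneg (k : ℕ) : 0 ≤ (dseq k).1 ∧ 1 ≤ (dseq k).2 := by
  induction k with
  | zero => exact ⟨le_refl 0, le_refl 1⟩
  | succ k ih =>
    refine ⟨le_trans zero_le_one ih.2, ?_⟩
    have h1 : (1 : ℤ) ≤ ⌈Real.exp (((dseq k).2 : ℝ) ^ 2)⌉ := Int.ceil_pos.mpr (Real.exp_pos _)
    show 1 ≤ ⌈Real.exp (((dseq k).2 : ℝ) ^ 2)⌉ * (dseq k).2 + (dseq k).1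
    nlinarith [ih.1, ih.2]

lemma one_le_qseq (k : ℕ) : 1 ≤ qseq k := (dseq_nonneg k).2

lemma three_le_aseq (k : ℕ) : 3 ≤ aseq (k + 1) := by
  show 3 ≤ ⌈Real.exp (((dseq k).2 : ℝ) ^ 2)⌉
  have hq : (1 : ℝ) ≤ ((dseq k).2 : ℝ) := by exact_mod_cast one_le_qseq k
  have h1 : (1 : ℝ) ≤ ((dseq k).2 : ℝ) ^ 2 := by nlinarith
  have h2 : (2 : ℝ) < Real.exp (((dseq k).2 : ℝ) ^ 2) := by
    have := Real.add_one_lt_exp (x := ((dseq k).2 : ℝ) ^ 2) (by nlinarith)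
    linarith
  have := Int.lt_ceil.mpr (show ((2 : ℤ) : ℝ) < Real.exp (((dseq k).2 : ℝ) ^ 2) by
    exact_mod_cast h2)
  omega

lemma exp_le_aseq (k : ℕ) : Real.exp ((qseq k : ℝ) ^ 2) ≤ (aseq (k + 1) : ℝ) :=
  Int.le_ceil _

lemma aseq_le_qseq_succ (k : ℕ) : aseq (k + 1) ≤ qseq (k + 1) := by
  rw [qseq_succ]
  rcases k with _ | k
  · simp [qseq_zero]
    have := dseq_nonneg 0
    nlinarith [three_le_aseq 0]
  · have h1 := one_le_qseq (k + 1)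
    have h2 : 0 ≤ (dseq (k + 1)).1 := (dseq_nonneg (k + 1)).1
    nlinarith [three_le_aseq (k + 1)]

lemma qseq_ge (k : ℕ) : (k : ℤ) + 1 ≤ qseq k := by
  induction k with
  | zero => simp [qseq_zero]
  | succ k ih =>
    rw [qseq_succ]
    have h2 : 0 ≤ (dseq k).1 := (dseq_nonneg k).1
    have h3 : 3 ≤ aseq (k + 1) := three_le_aseq k
    have h4 : 1 ≤ qseq k := one_le_qseq k
    push_cast
    nlinarith

/-- Finite continued fraction tails: `tseq n k = [a k; a (k+1), …, a (k+n)]`. -/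
noncomputable def tseq : ℕ → ℕ → ℝ
  | 0, k => (aseq k : ℝ)
  | n + 1, k => (aseq k : ℝ) + (tseq n (k + 1))⁻¹

lemma tseq_bound : ∀ n k, (aseq k : ℝ) ≤ tseq n k ∧ tseq n k ≤ (aseq k : ℝ) + 1 := by
  intro n
  induction n with
  | zero => intro k; exact ⟨le_refl _, by simp [tseq]⟩
  | succ n ih =>
    intro k
    have h3 : (3 : ℝ) ≤ (aseq (k + 1) : ℝ) := by exact_mod_cast three_le_aseq k
    have hlb := (ih (k + 1)).1
    have hpos : (0 : ℝ) < tseq n (k + 1) := by linarith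
    have hinv : (tseq n (k + 1))⁻¹ ≤ 1 := by
      rw [inv_le_one_iff₀]; right; linarith
    constructor
    · show (aseq k : ℝ) ≤ (aseq k : ℝ) + (tseq n (k + 1))⁻¹
      have := inv_nonneg.mpr hpos.le
      linarith
    · show (aseq k : ℝ) + (tseq n (k + 1))⁻¹ ≤ (aseq k : ℝ) + 1
      linarith

lemma three_le_tseq (n k : ℕ) : 3 ≤ tseq n (k + 1) :=
  le_trans (by exact_mod_cast three_le_aseq k) (tseq_bound n (k + 1)).1

lemma tseq_diff : ∀ n k, |tseq (n + 1) k - tseq n k| ≤ (1 / 9 : ℝ) ^ n := by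
  intro n
  induction n with
  | zero =>
    intro k
    have h3 := three_le_tseq 0 k
    have : tseq 1 k - tseq 0 k = (tseq 0 (k + 1))⁻¹ := by simp [tseq]
    rw [this, pow_zero, abs_of_nonneg (by positivity)]
    rw [inv_le_one_iff₀]; right; linarith
  | succ n ih =>
    intro k
    have hx3 : 3 ≤ tseq (n + 1) (k + 1) := three_le_tseq (n + 1) k
    have hy3 : 3 ≤ tseq n (k + 1) := three_le_tseq n k
    have hxpos : (0 : ℝ) < tseq (n + 1) (k + 1) := by linarith
    have hypos : (0 : ℝ) < tseq n (k + 1) := by linarith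
    have hnum : |tseq n (k + 1) - tseq (n + 1) (k + 1)| ≤ (1 / 9 : ℝ) ^ n := by
      rw [abs_sub_comm]; exact ih (k + 1)
    have heq : tseq (n + 1 + 1) k - tseq (n + 1) k =
        (tseq n (k + 1) - tseq (n + 1) (k + 1)) / (tseq (n + 1) (k + 1) * tseq n (k + 1)) := by
      show ((aseq k : ℝ) + (tseq (n + 1) (k + 1))⁻¹) - ((aseq k : ℝ) + (tseq n (k + 1))⁻¹) = _
      field_simp
      ring
    have hmul : (0 : ℝ) < tseq (n + 1) (k + 1) * tseq n (k + 1) := mul_pos hxpos hypos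
    have hden : (9 : ℝ) ≤ tseq (n + 1) (k + 1) * tseq n (k + 1) := by nlinarith
    rw [heq, abs_div, abs_of_pos hmul]
    calc |tseq n (k + 1) - tseq (n + 1) (k + 1)| / (tseq (n + 1) (k + 1) * tseq n (k + 1))
        ≤ (1 / 9 : ℝ) ^ n / 9 := div_le_div₀ (by positivity) hnum (by norm_num) hden
      _ = (1 / 9 : ℝ) ^ (n + 1) := by rw [pow_succ]; ring

lemma tendsto_tseq (k : ℕ) : ∃ L : ℝ, Tendsto (fun n => tseq n k) atTop (𝓝 L) := by
  have hc : CauchySeq (fun n => tseq n k) := by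
    apply cauchySeq_of_le_geometric (1 / 9 : ℝ) 1 (by norm_num)
    intro n
    rw [Real.dist_eq, abs_sub_comm, one_mul]
    exact tseq_diff n k
  exact cauchySeq_tendsto_of_complete hc

/-- The tails of the infinite continued fraction. -/
noncomputable def θt (k : ℕ) : ℝ := (tendsto_tseq k).choose

lemma θt_tendsto (k : ℕ) : Tendsto (fun n => tseq n k) atTop (𝓝 (θt k)) :=
  (tendsto_tseq k).choose_spec

lemma three_le_θt (k : ℕ) : 3 ≤ θt (k + 1) :=
  ge_of_tendsto' (θt_tendsto (k + 1)) (fun n => three_le_tseq n k)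

lemma θt_succ_pos (k : ℕ) : 0 < θt (k + 1) := lt_of_lt_of_le (by norm_num) (three_le_θt k)

lemma θt_rec (k : ℕ) : θt k = (aseq k : ℝ) + (θt (k + 1))⁻¹ := by
  have h1 : Tendsto (fun n => tseq (n + 1) k) atTop (𝓝 (θt k)) :=
    (θt_tendsto k).comp (tendsto_add_atTop_nat 1)
  have h2 : Tendsto (fun n => (aseq k : ℝ) + (tseq n (k + 1))⁻¹) atTop
      (𝓝 ((aseq k : ℝ) + (θt (k + 1))⁻¹)) :=
    tendsto_const_nhds.add ((θt_tendsto (k + 1)).inv₀ (ne_of_gt (θt_succ_pos k)))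
  exact tendsto_nhds_unique h1 (by simpa [tseq] using h2)

lemma θt_inv_bounds (k : ℕ) : 0 < (θt (k + 1))⁻¹ ∧ (θt (k + 1))⁻¹ ≤ 1 / 3 := by
  have h := three_le_θt k
  constructor
  · exact inv_pos.mpr (θt_succ_pos k)
  · rw [inv_le_comm₀ (θt_succ_pos k) (by norm_num)]
    linarith

lemma floor_θt (k : ℕ) : ⌊θt k⌋ = aseq k := by
  have h := θt_inv_bounds k
  rw [Int.floor_eq_iff]
  constructor
  · rw [θt_rec k]; linarith [h.1]
  · rw [θt_rec k]; linarith [h.2]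

lemma fract_θt (k : ℕ) : Int.fract (θt k) = (θt (k + 1))⁻¹ := by
  rw [Int.fract, floor_θt, θt_rec k]; ring

lemma gauss_eq (k : ℕ) : gaussIter (θt 0) k = θt k := by
  induction k with
  | zero => rfl
  | succ k ih =>
    show (Int.fract (gaussIter (θt 0) k))⁻¹ = θt (k + 1)
    rw [ih, fract_θt, inv_inv]

lemma cfA_eq (k : ℕ) : cfA (θt 0) k = aseq k := by
  rw [cfA, gauss_eq, floor_θt]

lemma cfQ_eq (k : ℕ) : cfQ (θt 0) k = qseq k := by
  induction k using Nat.twoStepInduction with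
  | zero => rfl
  | one =>
    show cfA (θt 0) 1 = qseq 1
    rw [cfA_eq]
    show aseq 1 = aseq 1 * qseq 0 + (dseq 0).1
    rw [qseq_zero]
    show aseq 1 = aseq 1 * 1 + 0
    ring
  | more k ih1 ih2 =>
    show cfA (θt 0) (k + 2) * cfQ (θt 0) (k + 1) + cfQ (θt 0) k = qseq (k + 2)
    rw [cfA_eq, ih1, ih2, qseq_succ (k + 1), dseq_fst]

lemma stream_eq (n : ℕ) :
    GenContFract.IntFractPair.stream (θt 0) n = some ⟨aseq n, (θt (n + 1))⁻¹⟩ := by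
  induction n with
  | zero =>
    show some (GenContFract.IntFractPair.of (θt 0)) = _
    unfold GenContFract.IntFractPair.of
    rw [floor_θt, fract_θt]
  | succ n ih =>
    show (GenContFract.IntFractPair.stream (θt 0) n).bind _ = _
    rw [ih]
    have hne : ((θt (n + 1))⁻¹ : ℝ) ≠ 0 := ne_of_gt (θt_inv_bounds n).1
    rw [Option.bind_some]
    rw [if_neg hne, inv_inv]
    unfold GenContFract.IntFractPair.of
    rw [floor_θt, fract_θt]

lemma irrational_θt : Irrational (θt 0) := by
  intro ⟨q, hq⟩
  have hterm : (GenContFract.of (θt 0)).Terminates :=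
    (GenContFract.terminates_iff_rat (θt 0)).mpr ⟨q, hq.symm⟩
  obtain ⟨n, hn⟩ := hterm
  have h2 : GenContFract.IntFractPair.stream (θt 0) (n + 1) = none :=
    GenContFract.of_terminatedAt_n_iff_succ_nth_intFractPair_stream_eq_none.mp hn
  rw [stream_eq] at h2
  exact Option.some_ne_none _ h2

end WAaux

/-- Well-approximated irrational numbers exist; for example, the number
obtained by inductively setting `c_k = ⌈exp (q_{k-1}²)⌉` is well-approximated. -/
theorem wellApproximated_exists :
    ∃ θ : ℝ, (∀ k : ℕ, 1 ≤ k → cfA θ k = ⌈Real.exp ((cfQ θ (k - 1) : ℝ) ^ 2)⌉) ∧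
      WellApproximated θ := by
  classical
  refine ⟨WAaux.θt 0, ?_, WAaux.irrational_θt, id, strictMono_id, ?_⟩
  · rintro (_ | j) hk
    · omega
    · show cfA (WAaux.θt 0) (j + 1) = ⌈Real.exp ((cfQ (WAaux.θt 0) j : ℝ) ^ 2)⌉
      rw [WAaux.cfA_eq, WAaux.cfQ_eq]
      rfl
  · intro C hC
    simp only [WAaux.cfQ_eq, id_eq]
    apply squeeze_zero' (g := fun n => Real.exp (C * (WAaux.qseq n : ℝ) - (WAaux.qseq n : ℝ) ^ 2))
    · filter_upwards with n
      have : (0 : ℝ) < (WAaux.qseq (n + 1) : ℝ) := by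
        exact_mod_cast lt_of_lt_of_le zero_lt_one (WAaux.one_le_qseq (n + 1))
      positivity
    · filter_upwards with n
      have h1 : Real.exp ((WAaux.qseq n : ℝ) ^ 2) ≤ (WAaux.qseq (n + 1) : ℝ) :=
        le_trans (WAaux.exp_le_aseq n) (by exact_mod_cast WAaux.aseq_le_qseq_succ n)
      have h2 : (0 : ℝ) < Real.exp ((WAaux.qseq n : ℝ) ^ 2) := Real.exp_pos _
      calc Real.exp (C * (WAaux.qseq n : ℝ)) / (WAaux.qseq (n + 1) : ℝ)
          ≤ Real.exp (C * (WAaux.qseq n : ℝ)) / Real.exp ((WAaux.qseq n : ℝ) ^ 2) := by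
            gcongr
        _ = Real.exp (C * (WAaux.qseq n : ℝ) - (WAaux.qseq n : ℝ) ^ 2) := by
            rw [Real.exp_sub]
    · apply Real.tendsto_exp_atBot.comp
      apply tendsto_atBot_mono' atTop (f₁ := fun n : ℕ => C - ((n : ℝ) + 1))
      · filter_upwards [eventually_ge_atTop ⌈C⌉₊] with n hn
        have hq1 : (1 : ℝ) ≤ (WAaux.qseq n : ℝ) := by exact_mod_cast WAaux.one_le_qseq n
        have hqn : (n : ℝ) + 1 ≤ (WAaux.qseq n : ℝ) := by exact_mod_cast WAaux.qseq_ge n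
        have hCn : C ≤ (n : ℝ) := le_trans (Nat.le_ceil C) (by exact_mod_cast hn)
        have hCq : C ≤ (WAaux.qseq n : ℝ) := by linarith
        nlinarith
      · have hA : Tendsto (fun n : ℕ => (n : ℝ) + 1) atTop atTop :=
          tendsto_atTop_add_const_right _ 1 tendsto_natCast_atTop_atTop
        have hB : Tendsto (fun n : ℕ => -((n : ℝ) + 1)) atTop atBot :=
          tendsto_neg_atTop_atBot.comp hA
        have hC2 : Tendsto (fun n : ℕ => C + -((n : ℝ) + 1)) atTop atBot :=
          tendsto_atBot_add_const_left _ C hB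
        simpa [sub_eq_add_neg] using hC2
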